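/- Let (M,ρ) be a finite pseudometric space and G = (V,E) a finite connected graph joining M that has an interior vertex of degree 1 (a vertex of degree 1 not belonging to M). Then the weights of generalized fillings of (M,ρ) of type G are unbounded below: for every c ∈ ℝ there exists a weight function w : E → ℝ such that (G,w) is a generalized filling of (M,ρ) and w(G) < c. In other words, mpf₋(M,G) = −∞. -/

import Mathlib

open scoped BigOperators

namespace MinFill

variable {V : Type*}

/-- The total weight of a (generalized) weighted graph: the sum of the weights
of its edges. -/
noncomputable def graphWeight (G : SimpleGraph V) (w : Sym2 V → ℝ) : ℝ :=
  ∑ᶠ e ∈ G.edgeSet, w e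

/-- The weight of a walk: the sum of the weights of its edges. -/
def walkWeight {G : SimpleGraph V} (w : Sym2 V → ℝ) {u v : V} (p : G.Walk u v) : ℝ :=
  (p.edges.map w).sum

/-- `dw G w u v` is the minimum over simple paths in `G` from `u` to `v` of the
sum of the weights of their edges. -/
noncomputable def dw (G : SimpleGraph V) (w : Sym2 V → ℝ) (u v : V) : ℝ :=
  sInf {r : ℝ | ∃ p : G.Walk u v, p.IsPath ∧ walkWeight w p = r}

/-- The degree of a vertex: the number of edges incident to it. -/
noncomputable def deg (G : SimpleGraph V) (v : V) : ℕ :=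
  (G.neighborSet v).ncard

/-- `ρ` is a pseudometric on the subset `M`: symmetric, nonnegative, vanishing
on the diagonal and satisfying the triangle inequality. -/
def IsPseudometricOn (M : Set V) (ρ : V → V → ℝ) : Prop :=
  (∀ p ∈ M, ∀ q ∈ M, ρ p q = ρ q p) ∧
  (∀ p ∈ M, ∀ q ∈ M, 0 ≤ ρ p q) ∧
  (∀ p ∈ M, ρ p p = 0) ∧
  (∀ p ∈ M, ∀ q ∈ M, ∀ r ∈ M, ρ p r ≤ ρ p q + ρ q r)

/-- `(G, w)` is a generalized filling of `(M, ρ)` (with `M ⊆ V`): `G` is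
connected (and joins `M`), and for all boundary points `p, q ∈ M` every simple
path in `G` from `p` to `q` has weight at least `ρ p q` (equivalently
`ρ p q ≤ d_w(p, q)`). -/
def IsGenFilling (G : SimpleGraph V) (w : Sym2 V → ℝ) (M : Set V) (ρ : V → V → ℝ) : Prop :=
  G.Connected ∧ ∀ p ∈ M, ∀ q ∈ M, ∀ γ : G.Walk p q, γ.IsPath → ρ p q ≤ walkWeight w γ

/-- If a connected graph `G` joining `M` has an interior
vertex of degree 1, then the weights of generalized fillings of type `G` are
unbounded below: `mpf₋(M, G) = -∞`. -/
theorem interior_leaf_unbounded_below {V : Type*} [Fintype V] (G : SimpleGraph V)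
    (M : Set V) (ρ : V → V → ℝ) (hρ : IsPseudometricOn M ρ) (hconn : G.Connected)
    (x : V) (hx : deg G x = 1) (hxM : x ∉ M) :
    ∀ c : ℝ, ∃ w : Sym2 V → ℝ, IsGenFilling G w M ρ ∧ graphWeight G w < c := by
  classical
  intro c
  obtain ⟨y, hy⟩ := Set.ncard_eq_one.mp hx
  have hadj : G.Adj x y := by
    have : y ∈ G.neighborSet x := by rw [hy]; exact rfl
    exact this
  set e₀ : Sym2 V := s(x, y) with he₀
  set K : ℝ := ∑ p : V, ∑ q : V, |ρ p q| with hK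
  have hK0 : 0 ≤ K :=
    Finset.sum_nonneg fun _ _ => Finset.sum_nonneg fun _ _ => abs_nonneg _
  have hKρ : ∀ p q : V, ρ p q ≤ K := by
    intro p q
    calc ρ p q ≤ |ρ p q| := le_abs_self _
      _ ≤ ∑ q' : V, |ρ p q'| :=
        Finset.single_le_sum (f := fun q' => |ρ p q'|) (fun _ _ => abs_nonneg _)
          (Finset.mem_univ q)
      _ ≤ K := by
        rw [hK]
        exact Finset.single_le_sum (f := fun p' => ∑ q' : V, |ρ p' q'|)
          (fun i _ => Finset.sum_nonneg fun _ _ => abs_nonneg _) (Finset.mem_univ p)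
  have hfin : G.edgeSet.Finite := Set.toFinite _
  set S : Finset (Sym2 V) := hfin.toFinset with hS
  set t : ℝ := c - 1 - K * S.card with ht
  set w : Sym2 V → ℝ := fun e => if e = e₀ then t else K with hw
  refine ⟨w, ⟨hconn, ?_⟩, ?_⟩
  · intro p hp q hq γ hγ
    by_cases hpq : p = q
    · subst hpq
      have hnil : γ = SimpleGraph.Walk.nil := SimpleGraph.Walk.isPath_iff_eq_nil.mp hγ
      subst hnil
      simp [walkWeight, hρ.2.2.1 p hp]
    · have hxp : x ≠ p := fun h => hxM (h ▸ hp)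
      have hxq : x ≠ q := fun h => hxM (h ▸ hq)
      have hxs : x ∉ γ.support := by
        intro hxsup
        have hne := hγ.edges_nodup
        have hdecomp := γ.take_spec hxsup
        set γ₁ := γ.takeUntil x hxsup with hγ₁
        set γ₂ := γ.dropUntil x hxsup with hγ₂
        have h2 : ¬ γ₂.Nil := SimpleGraph.Walk.not_nil_of_ne hxq
        obtain ⟨b, hb, rest, hrest⟩ := SimpleGraph.Walk.not_nil_iff.mp h2
        have hby : b = y := by
          have : b ∈ G.neighborSet x := hb
          rw [hy] at this; exact this
        have he2 : e₀ ∈ γ₂.edges := by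
          rw [hrest, SimpleGraph.Walk.edges_cons, he₀, ← hby]
          exact List.mem_cons_self
        have h1 : ¬ (γ₁.reverse).Nil := SimpleGraph.Walk.not_nil_of_ne hxp
        obtain ⟨b', hb', rest', hrest'⟩ := SimpleGraph.Walk.not_nil_iff.mp h1
        have hby' : b' = y := by
          have : b' ∈ G.neighborSet x := hb'
          rw [hy] at this; exact this
        have he1 : e₀ ∈ γ₁.edges := by
          have : e₀ ∈ γ₁.reverse.edges := by
            rw [hrest', SimpleGraph.Walk.edges_cons, he₀, ← hby']
            exact List.mem_cons_self
          rwa [SimpleGraph.Walk.edges_reverse, List.mem_reverse] at this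
        have : (γ₁.append γ₂).edges.Nodup := by rw [hdecomp]; exact hne
        rw [SimpleGraph.Walk.edges_append, List.nodup_append] at this
        exact this.2.2 _ he1 _ he2 rfl
      have hall : ∀ r ∈ γ.edges.map w, r = K := by
        intro r hr
        obtain ⟨e, he, hre⟩ := List.mem_map.mp hr
        have hene : e ≠ e₀ := by
          intro hee
          subst hee
          exact hxs (SimpleGraph.Walk.fst_mem_support_of_mem_edges γ he)
        rw [← hre, hw]; simp [hene]
      have hsum : walkWeight w γ = γ.length • K := by
        rw [walkWeight, List.sum_eq_card_nsmul _ K hall,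
          List.length_map, SimpleGraph.Walk.length_edges]
      have hlen : 1 ≤ γ.length := by
        rcases Nat.eq_zero_or_pos γ.length with h0 | h0
        · exact absurd (SimpleGraph.Walk.eq_of_length_eq_zero h0) hpq
        · exact h0
      calc ρ p q ≤ K := hKρ p q
        _ ≤ γ.length • K := by
          rw [nsmul_eq_mul]
          exact le_mul_of_one_le_left hK0 (by exact_mod_cast hlen)
        _ = walkWeight w γ := hsum.symm
  · have hgw : graphWeight G w = ∑ e ∈ S, w e := by
      rw [graphWeight, finsum_mem_eq_finite_toFinset_sum _ hfin]
    have he₀S : e₀ ∈ S := by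
      rw [hS, Set.Finite.mem_toFinset]
      exact hadj
    have hsplit : ∑ e ∈ S, w e = t + ∑ e ∈ S.erase e₀, w e := by
      rw [← Finset.sum_erase_add _ _ he₀S, add_comm]
      congr 1
      simp [hw]
    have herase : ∑ e ∈ S.erase e₀, w e = (S.erase e₀).card • K := by
      rw [Finset.sum_eq_card_nsmul]
      intro e he
      have : e ≠ e₀ := (Finset.mem_erase.mp he).1
      simp [hw, this]
    have hcard : ((S.erase e₀).card : ℝ) ≤ S.card := by
      exact_mod_cast Finset.card_le_card (Finset.erase_subset _ _)
    rw [hgw, hsplit, herase, nsmul_eq_mul]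
    calc t + (S.erase e₀).card * K ≤ t + S.card * K := by
          gcongr
      _ = c - 1 := by rw [ht]; ring
      _ < c := by linarith

end MinFill
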